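/- arXiv:2401.15178 — 4 statements merged into one kernel-verified Lean document; each statement's English description precedes it below -/
import Mathlib

section
/- If f(x) = ∫₀^∞ e^{-xt} dσ(t) for a positive Borel measure σ on [0,∞), then the L²(0,1) norm of f satisfies ‖f‖_{L²(0,1)} ≥ ∫₀^∞ dσ(t)/(t+1). -/
open MeasureTheory Set

lemma stmt2_sigmaFinite (σ : Measure ℝ) (hσ0 : σ (Set.Iio 0) = 0)
    (hstar : Integrable (fun t => 1 / (t + 1)) σ) : SigmaFinite σ := by
  refine ⟨⟨⟨fun n => Iio 0 ∪ Icc 0 n, fun _ => trivial, fun n => ?_, ?_⟩⟩⟩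
  · refine (measure_union_le _ _).trans_lt ?_
    rw [hσ0, zero_add]
    refine lt_of_le_of_lt (measure_mono (fun t ht => ?_))
      (hstar.measure_norm_ge_lt_top (ε := 1/(n+1)) (by positivity))
    have h0 : (0:ℝ) ≤ t := ht.1
    have h1 : t ≤ n := ht.2
    simp only [mem_setOf_eq, Real.norm_eq_abs]
    rw [abs_of_nonneg (by positivity)]
    exact div_le_div_of_nonneg_left one_pos.le (by linarith) (by linarith)
  · refine eq_univ_of_forall fun t => ?_
    rcases lt_or_ge t 0 with h | h
    · exact mem_iUnion.2 ⟨0, Or.inl h⟩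
    · exact mem_iUnion.2 ⟨⌈t⌉₊, Or.inr ⟨h, Nat.le_ceil t⟩⟩

lemma stmt2_pointwise (t : ℝ) (ht : 0 ≤ t) :
    1 / (t + 1) ≤ ∫ x in Ioo (0:ℝ) 1, Real.exp (-x * t) := by
  have hcalc : ∫ x in Ioo (0:ℝ) 1, Real.exp (-x * t)
      = ∫ x in (0:ℝ)..1, Real.exp (-t * x) := by
    rw [intervalIntegral.integral_of_le zero_le_one, ← MeasureTheory.integral_Ioc_eq_integral_Ioo]
    congr 1; ext x; ring_nf
  rw [hcalc]
  rcases eq_or_lt_of_le ht with h0 | h0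
  · simp [← h0]
  · have heq : ∫ x in (0:ℝ)..1, Real.exp (-t * x) = (1 - Real.exp (-t)) / t := by
      rw [intervalIntegral.integral_comp_mul_left (f := Real.exp) (c := -t)
        (by linarith : (-t:ℝ) ≠ 0)]
      simp only [integral_exp, smul_eq_mul, mul_one, mul_zero, Real.exp_zero]
      field_simp [h0.ne']
      ring
    rw [heq, div_le_div_iff₀ (by linarith) h0]
    have h1 : t + 1 ≤ Real.exp t := Real.add_one_le_exp t
    have h2 : Real.exp (-t) * Real.exp t = 1 := by rw [← Real.exp_add]; simp
    have h3 : 0 < Real.exp (-t) := Real.exp_pos _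
    nlinarith

/-- If `f(x) = ∫₀^∞ e^{-xt} dσ(t)` for a positive Borel measure `σ` on `[0,∞)`,
then `‖f‖_{L²(0,1)} ≥ ∫₀^∞ dσ(t)/(t+1)`. -/
theorem stmt2 (σ : Measure ℝ) (hσ0 : σ (Set.Iio 0) = 0)
    (f : ℝ → ℝ)
    (hint : ∀ x : ℝ, 0 < x → Integrable (fun t => Real.exp (-x * t)) σ)
    (hf : ∀ x : ℝ, 0 < x → f x = ∫ t, Real.exp (-x * t) ∂σ)
    (hstar : Integrable (fun t => 1 / (t + 1)) σ)
    (hfL2 : MemLp f 2 (volume.restrict (Set.Ioo 0 1))) :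
    (eLpNorm f 2 (volume.restrict (Set.Ioo 0 1))).toReal ≥ ∫ t, 1 / (t + 1) ∂σ := by
  haveI hσf : SigmaFinite σ := stmt2_sigmaFinite σ hσ0 hstar
  set μ := volume.restrict (Set.Ioo (0:ℝ) 1) with hμ
  haveI : IsProbabilityMeasure μ :=
    ⟨by rw [hμ, Measure.restrict_apply_univ, Real.volume_Ioo]; norm_num⟩
  have hfint : Integrable f μ := hfL2.integrable one_le_two
  -- a.e. points of μ are in Ioo 0 1
  have haeμ : ∀ᵐ x ∂μ, x ∈ Ioo (0:ℝ) 1 := ae_restrict_mem measurableSet_Ioo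
  -- product integrability
  have hGm : AEStronglyMeasurable (fun p : ℝ × ℝ => Real.exp (-p.1 * p.2)) (μ.prod σ) :=
    (Real.continuous_exp.comp ((continuous_fst.neg).mul continuous_snd)).aestronglyMeasurable
  have hprod : Integrable (fun p : ℝ × ℝ => Real.exp (-p.1 * p.2)) (μ.prod σ) := by
    rw [integrable_prod_iff hGm]
    constructor
    · filter_upwards [haeμ] with x hx using hint x hx.1
    · refine hfint.congr ?_
      filter_upwards [haeμ] with x hx
      rw [hf x hx.1]
      congr 1; ext t; rw [Real.norm_eq_abs, abs_of_nonneg (Real.exp_pos _).le]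
  -- Fubini
  have hswap : ∫ x, (∫ t, Real.exp (-x * t) ∂σ) ∂μ
      = ∫ t, (∫ x, Real.exp (-x * t) ∂μ) ∂σ :=
    integral_integral_swap (f := fun x t => Real.exp (-x * t)) hprod
  have hL : ∫ x, f x ∂μ = ∫ t, (∫ x, Real.exp (-x * t) ∂μ) ∂σ := by
    rw [← hswap]
    refine integral_congr_ae ?_
    filter_upwards [haeμ] with x hx using hf x hx.1
  -- integrability of the inner integral in t
  have hRHSint : Integrable (fun t => ∫ x, Real.exp (-x * t) ∂μ) σ :=
    hprod.integral_prod_right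
  -- a.e. t is nonnegative
  have haet : ∀ᵐ t ∂σ, 0 ≤ t := by
    rw [ae_iff]
    have : {t : ℝ | ¬ 0 ≤ t} = Iio 0 := by ext t; simp
    rw [this]; exact hσ0
  -- main comparison
  have hmain : ∫ t, 1 / (t + 1) ∂σ ≤ ∫ x, f x ∂μ := by
    rw [hL]
    refine integral_mono_ae hstar hRHSint ?_
    filter_upwards [haet] with t ht using stmt2_pointwise t ht
  -- L¹ ≤ L²
  have h1 : ∫ x, f x ∂μ ≤ ∫ x, ‖f x‖ ∂μ :=
    integral_mono hfint hfint.norm (fun x => le_abs_self _)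
  have h2 : (eLpNorm f 1 μ) = ENNReal.ofReal (∫ x, ‖f x‖ ∂μ) := by
    rw [eLpNorm_one_eq_lintegral_enorm, ← ofReal_integral_norm_eq_lintegral_enorm hfint]
  have h3 : eLpNorm f 1 μ ≤ eLpNorm f 2 μ :=
    eLpNorm_le_eLpNorm_of_exponent_le (by norm_num) hfL2.aestronglyMeasurable
  have h4 := ENNReal.toReal_mono hfL2.2.ne h3
  rw [h2, ENNReal.toReal_ofReal (integral_nonneg (fun x => norm_nonneg _))] at h4
  exact le_trans hmain (h1.trans h4)
end

section
/- Let α(z) = arccos(1/z) = i·log((1 − i√(z²−1))/z) with principal branches. For every z in Ω = {z ∈ ℂ : Re z > 0, z ∉ [0,1]}, the real part of α(z) lies strictly in (0, π/2). -/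
open Real

/-- For `α(z) = arccos(1/z) = i log((1 − i√(z²−1))/z)` (principal branches), the real
part of `α(z)` lies strictly in `(0, π/2)` for every `z` in the right half-plane
with the segment `[0,1]` removed. -/
theorem stmt12 (z : ℂ) (hz : 0 < z.re) (hz2 : ¬ (z.im = 0 ∧ z.re ≤ 1)) :
    0 < (Complex.I * Complex.log ((1 - Complex.I * (z ^ 2 - 1) ^ ((1 : ℂ) / 2)) / z)).re ∧
    (Complex.I * Complex.log ((1 - Complex.I * (z ^ 2 - 1) ^ ((1 : ℂ) / 2)) / z)).re < π / 2 := by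
  have hz0 : z ≠ 0 := fun h => by simp [h] at hz
  -- basic facts about a = z^2 - 1
  have haim : (z ^ 2 - 1 : ℂ).im = 2 * z.re * z.im := by
    simp [pow_two, Complex.mul_im]; ring
  have hare : (z ^ 2 - 1 : ℂ).re = z.re * z.re - z.im * z.im - 1 := by
    simp [pow_two, Complex.mul_re]
  have haux : ¬((z ^ 2 - 1 : ℂ).re ≤ 0 ∧ (z ^ 2 - 1 : ℂ).im = 0) := by
    rintro ⟨h1, h2⟩
    rw [haim] at h2
    have hy : z.im = 0 := by
      rcases mul_eq_zero.mp h2 with h | h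
      · rcases mul_eq_zero.mp h with h | h
        · norm_num at h
        · exact absurd h (ne_of_gt hz)
      · exact h
    rw [hare, hy] at h1
    exact hz2 ⟨hy, by nlinarith⟩
  have ha0 : (z ^ 2 - 1 : ℂ) ≠ 0 := by
    intro h
    exact haux ⟨by rw [h]; norm_num, by rw [h]; norm_num⟩
  have hargne : Complex.arg (z ^ 2 - 1) ≠ π := by
    intro h
    rw [Complex.arg_eq_pi_iff] at h
    exact haux ⟨h.1.le, h.2⟩
  set s : ℂ := (z ^ 2 - 1) ^ ((1 : ℂ) / 2) with hsdef
  -- s squares to z^2 - 1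
  have hs2 : s ^ 2 = z ^ 2 - 1 := by
    rw [hsdef, pow_two, ← Complex.cpow_add _ _ ha0]
    norm_num
  -- real part of s is positive
  have hp : 0 < s.re := by
    rw [hsdef, Complex.cpow_def_of_ne_zero ha0, Complex.exp_re]
    apply mul_pos (Real.exp_pos _)
    have him : (Complex.log (z ^ 2 - 1) * (1 / 2)).im = Complex.arg (z ^ 2 - 1) / 2 := by
      simp [Complex.mul_im, Complex.log_im]
      ring
    rw [him]
    apply Real.cos_pos_of_mem_Ioo
    constructor
    · have := Complex.neg_pi_lt_arg (z ^ 2 - 1)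
      linarith
    · have h1 := Complex.arg_le_pi (z ^ 2 - 1)
      have h2 := lt_of_le_of_ne h1 hargne
      linarith
  -- p q relations
  have e1 : s.re * s.im = z.re * z.im := by
    have := congrArg Complex.im hs2
    simp [pow_two, Complex.mul_im] at this
    linarith
  have hqy : 0 ≤ s.im * z.im := by
    by_contra h
    push_neg at h
    have h1 : (s.re * z.re) * (s.im * z.im) = (z.re * z.im) ^ 2 := by
      linear_combination (z.re * z.im) * e1
    nlinarith [mul_pos hp hz, sq_nonneg (z.re * z.im)]
  set w : ℂ := (1 - Complex.I * s) / z with hwdef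
  -- w is invertible with explicit inverse
  have hmul : w * ((1 + Complex.I * s) / z) = 1 := by
    rw [hwdef]
    rw [div_mul_div_comm]
    rw [div_eq_one_iff_eq (mul_ne_zero hz0 hz0)]
    linear_combination hs2 - s ^ 2 * Complex.I_sq
  have hw0 : w ≠ 0 := left_ne_zero_of_mul_eq_one hmul
  have hwinv : w⁻¹ = (1 + Complex.I * s) / z := inv_eq_of_mul_eq_one_right hmul
  have hnsqw : 0 < Complex.normSq w := Complex.normSq_pos.mpr hw0
  have hnsqz : 0 < Complex.normSq z := Complex.normSq_pos.mpr hz0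
  -- real part of w is positive
  have hsum : w + w⁻¹ = 2 / z := by
    rw [hwinv, hwdef, ← add_div]
    congr 1
    ring
  have hre : 0 < w.re := by
    have h1 := congrArg Complex.re hsum
    rw [Complex.add_re, Complex.inv_re] at h1
    have h2 : ((2 : ℂ) / z).re = 2 * z.re / Complex.normSq z := by
      rw [Complex.div_re]
      simp
    rw [h2] at h1
    have h3 : 0 < 2 * z.re / Complex.normSq z := by positivity
    by_contra h
    push_neg at h
    have h4 : w.re / Complex.normSq w ≤ 0 :=
      div_nonpos_of_nonpos_of_nonneg h hnsqw.le
    linarith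
  -- imaginary part of w is negative
  have hdiff : w - w⁻¹ = (-(2 * Complex.I * s)) / z := by
    rw [hwinv, hwdef, ← sub_div]
    congr 1
    ring
  have him : w.im < 0 := by
    have h1 := congrArg Complex.im hdiff
    rw [Complex.sub_im, Complex.inv_im] at h1
    have h2 : ((-(2 * Complex.I * s)) / z).im =
        (-(2 * s.re) * z.re - 2 * s.im * z.im) / Complex.normSq z := by
      rw [Complex.div_im]
      simp [Complex.mul_re, Complex.mul_im]
      ring
    rw [h2] at h1
    have h3 : (-(2 * s.re) * z.re - 2 * s.im * z.im) / Complex.normSq z < 0 := by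
      apply div_neg_of_neg_of_pos _ hnsqz
      nlinarith [mul_pos hp hz]
    by_contra h
    push_neg at h
    rw [neg_div] at h1
    have h4 : 0 ≤ w.im / Complex.normSq w := div_nonneg h hnsqw.le
    linarith
  -- conclude via the argument of w
  have hre_log : (Complex.I * Complex.log w).re = -Complex.arg w := by
    simp [Complex.mul_re, Complex.log_im]
  rw [hre_log]
  have habs : |Complex.arg w| < π / 2 :=
    Complex.abs_arg_lt_pi_div_two_iff.mpr (Or.inl hre)
  have hneg : Complex.arg w < 0 := Complex.arg_neg_iff.mpr him
  rw [abs_lt] at habs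
  constructor <;> linarith
end

section
/- Let y > 0, p > 1, and z = (iy)^{1/p} (principal branch). Then Re α(z) ∈ (π/(2p), π/2), where α(z) = arccos(1/z) with principal branches. -/
open Real

/-- For `y > 0`, `p > 1` and `z = (iy)^{1/p}` (principal branch),
`Re α(z) ∈ (π/(2p), π/2)`, where `α(z) = arccos(1/z)` with principal branches,
i.e. `α(z) = i log((1 − i√(z²−1))/z)`. -/
theorem stmt13 (y p : ℝ) (hy : 0 < y) (hp : 1 < p) :
    π / (2 * p) <
      (Complex.I * Complex.log
        ((1 - Complex.I *
            (((Complex.I * y) ^ ((1 / p : ℝ) : ℂ)) ^ 2 - 1) ^ ((1 : ℂ) / 2)) /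
          ((Complex.I * y) ^ ((1 / p : ℝ) : ℂ)))).re ∧
    (Complex.I * Complex.log
        ((1 - Complex.I *
            (((Complex.I * y) ^ ((1 / p : ℝ) : ℂ)) ^ 2 - 1) ^ ((1 : ℂ) / 2)) /
          ((Complex.I * y) ^ ((1 / p : ℝ) : ℂ)))).re < π / 2 := by
  have hp0 : (0:ℝ) < p := lt_trans one_pos hp
  have hπ := Real.pi_pos
  set θ : ℝ := π / (2 * p) with hθdef
  have hθ0 : 0 < θ := by positivity
  have hθ2 : θ < π / 2 := by
    rw [hθdef, div_lt_div_iff₀ (by positivity) two_pos]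
    nlinarith
  have hc : 0 < Real.cos θ := Real.cos_pos_of_mem_Ioo ⟨by linarith, hθ2⟩
  have hs : 0 < Real.sin θ := Real.sin_pos_of_pos_of_lt_pi hθ0 (by linarith)
  have hpyth : Real.sin θ ^ 2 + Real.cos θ ^ 2 = 1 := Real.sin_sq_add_cos_sq θ
  set z : ℂ := (Complex.I * y) ^ ((1 / p : ℝ) : ℂ) with hzdef
  -- compute z
  have hIy : (Complex.I * (y:ℂ)) ≠ 0 := by
    simp [Complex.ext_iff, hy.ne']
  have habsIy : ‖Complex.I * y‖ = y := by
    rw [norm_mul, Complex.norm_I, Complex.norm_real, one_mul, Real.norm_eq_abs, abs_of_pos hy]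
  have hargIy : Complex.arg (Complex.I * y) = π / 2 := by
    rw [Complex.arg_eq_pi_div_two_iff]
    constructor <;> simp [hy]
  have hz_eq : z = Complex.exp (Complex.log (Complex.I * y) * ((1/p : ℝ) : ℂ)) :=
    Complex.cpow_def_of_ne_zero hIy _
  set R : ℝ := Real.exp (Real.log y * (1/p)) with hRdef
  have hR0 : 0 < R := Real.exp_pos _
  have h1 : (Complex.log (Complex.I * y) * ((1/p:ℝ):ℂ)).re = Real.log y * (1/p) := by
    rw [Complex.mul_re, Complex.log_re, Complex.ofReal_re, Complex.ofReal_im, habsIy]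
    ring
  have h2 : (Complex.log (Complex.I * y) * ((1/p:ℝ):ℂ)).im = θ := by
    rw [Complex.mul_im, Complex.log_im, Complex.ofReal_re, Complex.ofReal_im, hargIy, hθdef]
    ring
  have hzre : z.re = R * Real.cos θ := by rw [hz_eq, Complex.exp_re, h1, h2]
  have hzim : z.im = R * Real.sin θ := by rw [hz_eq, Complex.exp_im, h1, h2]
  -- w0 = z^2 - 1
  set w0 : ℂ := z ^ 2 - 1 with hw0def
  have hw0re : w0.re = R^2 * (Real.cos θ^2 - Real.sin θ^2) - 1 := by
    rw [hw0def, Complex.sub_re, Complex.one_re, pow_two, Complex.mul_re, hzre, hzim]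
    ring
  have hw0im : w0.im = 2 * (R^2 * (Real.sin θ * Real.cos θ)) := by
    rw [hw0def, Complex.sub_im, Complex.one_im, pow_two, Complex.mul_im, hzre, hzim]
    ring
  have hw0im_pos : 0 < w0.im := by rw [hw0im]; positivity
  have hw0ne : w0 ≠ 0 := by
    intro h
    rw [h] at hw0im_pos
    simp at hw0im_pos
  -- arg w0 ∈ (0, π)
  have harg0 : 0 < w0.arg := by
    rcases lt_or_eq_of_le (Complex.arg_nonneg_iff.2 hw0im_pos.le) with h | h
    · exact h
    · exfalso
      have := Complex.arg_eq_zero_iff.1 h.symm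
      linarith [this.2]
  have hargπ : w0.arg < π := by
    rcases lt_or_eq_of_le (Complex.arg_le_pi w0) with h | h
    · exact h
    · exfalso
      have := Complex.arg_eq_pi_iff.1 h
      linarith [this.2]
  -- s = sqrt(w0)
  set s : ℂ := w0 ^ ((1:ℂ)/2) with hsdef
  have hs_eq : s = Complex.exp (Complex.log w0 * ((1:ℂ)/2)) :=
    Complex.cpow_def_of_ne_zero hw0ne _
  set a : ℝ := s.re with hadef
  set b : ℝ := s.im with hbdef
  have h3 : (Complex.log w0 * ((1:ℂ)/2)).re = (Complex.log w0).re * (1/2) := by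
    rw [Complex.mul_re]
    norm_num
  have h4 : (Complex.log w0 * ((1:ℂ)/2)).im = w0.arg / 2 := by
    rw [Complex.mul_im, Complex.log_im]
    norm_num
    ring
  have ha : 0 < a := by
    rw [hadef, hs_eq, Complex.exp_re, h3, h4]
    have : 0 < Real.cos (w0.arg / 2) :=
      Real.cos_pos_of_mem_Ioo ⟨by linarith, by linarith⟩
    positivity
  have hb : 0 < b := by
    rw [hbdef, hs_eq, Complex.exp_im, h3, h4]
    have : 0 < Real.sin (w0.arg / 2) :=
      Real.sin_pos_of_pos_of_lt_pi (by linarith) (by linarith)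
    positivity
  have hs2 : s ^ 2 = w0 := by
    have : ((1:ℂ)/2) = (((2:ℕ)):ℂ)⁻¹ := by norm_num
    rw [hsdef, this]
    exact_mod_cast Complex.cpow_nat_inv_pow w0 two_ne_zero
  have hab : a * b = R^2 * (Real.sin θ * Real.cos θ) := by
    have h5 : (s^2).im = w0.im := by rw [hs2]
    rw [pow_two, Complex.mul_im, ← hadef, ← hbdef, hw0im] at h5
    linarith
  have haabb : a^2 - b^2 = R^2 * (Real.cos θ^2 - Real.sin θ^2) - 1 := by
    have h5 : (s^2).re = w0.re := by rw [hs2]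
    rw [pow_two, Complex.mul_re, ← hadef, ← hbdef, hw0re] at h5
    linear_combination h5
  -- key inequality
  have hv : 0 < a * Real.cos θ + b * Real.sin θ := by positivity
  have huv : (b * Real.cos θ - a * Real.sin θ) * (a * Real.cos θ + b * Real.sin θ)
      = Real.sin θ * Real.cos θ := by
    linear_combination (Real.cos θ^2 - Real.sin θ^2) * hab - (Real.sin θ * Real.cos θ) * haabb
  have key : a * Real.sin θ < b * Real.cos θ := by
    rcases lt_or_ge 0 (b * Real.cos θ - a * Real.sin θ) with h | h
    · linarith
    · exfalso
      have h9 : (b * Real.cos θ - a * Real.sin θ) * (a * Real.cos θ + b * Real.sin θ) ≤ 0 :=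
        mul_nonpos_iff.2 (Or.inr ⟨h, hv.le⟩)
      rw [huv] at h9
      exact absurd h9 (not_le.2 (mul_pos hs hc))
  -- w = (1 - I s)/z
  set w : ℂ := (1 - Complex.I * s) / z with hwdef
  have hnormSq : Complex.normSq z = R^2 := by
    rw [Complex.normSq_apply, hzre, hzim]
    linear_combination (R^2) * hpyth
  have hnre : (1 - Complex.I * s).re = 1 + b := by
    rw [Complex.sub_re, Complex.one_re, Complex.mul_re, Complex.I_re, Complex.I_im, ← hbdef]
    ring
  have hnim : (1 - Complex.I * s).im = -a := by
    rw [Complex.sub_im, Complex.one_im, Complex.mul_im, Complex.I_re, Complex.I_im, ← hadef]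
    ring
  have hwre : w.re = ((1 + b) * Real.cos θ - a * Real.sin θ) / R := by
    rw [hwdef, Complex.div_re, hnormSq, hnre, hnim, hzre, hzim]
    field_simp
    ring
  have hwim : w.im = -((a * Real.cos θ + (1 + b) * Real.sin θ) / R) := by
    rw [hwdef, Complex.div_im, hnormSq, hnre, hnim, hzre, hzim]
    field_simp
    ring
  have key2 : 0 < (1 + b) * Real.cos θ - a * Real.sin θ := by
    have h12 : (1 + b) * Real.cos θ - a * Real.sin θ
        = Real.cos θ + (b * Real.cos θ - a * Real.sin θ) := by ring
    rw [h12]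
    exact add_pos hc (sub_pos.2 key)
  have hwre0 : 0 < w.re := by
    rw [hwre]
    exact div_pos key2 hR0
  -- arg w ∈ (-π/2, π/2)
  have hargmem : w.arg ∈ Set.Ioo (-(π/2)) (π/2) := by
    have := Complex.abs_arg_lt_pi_div_two_iff.2 (Or.inl hwre0)
    exact abs_lt.1 this
  -- tan comparison: arg w < -θ
  have htanlt : Real.tan w.arg < Real.tan (-θ) := by
    rw [Complex.tan_arg, Real.tan_neg, Real.tan_eq_sin_div_cos]
    have h10 : w.im / w.re =
        -((a * Real.cos θ + (1 + b) * Real.sin θ) /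
          ((1 + b) * Real.cos θ - a * Real.sin θ)) := by
      have hYne : (1 + b) * Real.cos θ - a * Real.sin θ ≠ 0 := key2.ne'
      rw [hwre, hwim]
      field_simp
    rw [h10]
    apply neg_lt_neg
    rw [div_lt_div_iff₀ hc key2]
    have h11 : (a * Real.cos θ + (1 + b) * Real.sin θ) * Real.cos θ -
        Real.sin θ * ((1 + b) * Real.cos θ - a * Real.sin θ) = a := by
      linear_combination a * hpyth
    linarith [ha, h11]
  have harglt : w.arg < -θ := by
    have hmem2 : -θ ∈ Set.Ioo (-(π/2)) (π/2) :=
      ⟨neg_lt_neg hθ2, lt_trans (neg_lt_zero.2 hθ0) (by positivity)⟩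
    exact (Real.strictMonoOn_tan.lt_iff_lt hargmem hmem2).1 htanlt
  -- conclude
  have hre : (Complex.I * Complex.log w).re = -w.arg := by
    rw [Complex.mul_re, Complex.I_re, Complex.I_im, Complex.log_im]
    ring
  rw [hre]
  refine ⟨?_, ?_⟩
  · have := neg_lt_neg harglt
    rwa [neg_neg] at this
  · have := neg_lt_neg hargmem.1
    rwa [neg_neg] at this
end

section
/- The set of finite positive linear combinations of exponentials x ↦ e^{-xt}, t ≥ 0, is dense (in the L²(0,1) norm) in the cone 𝔠₂ of completely monotone functions with finite L²(0,1) norm. -/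
open MeasureTheory Set Filter
open scoped ENNReal Topology

lemma exp_lip {a b : ℝ} (hab : a ≤ b) (hb : b ≤ 0) : Real.exp b - Real.exp a ≤ b - a := by
  have h1 : Real.exp a = Real.exp b * Real.exp (a - b) := by
    rw [← Real.exp_add]; ring_nf
  have h2 := Real.add_one_le_exp (a - b)
  have h3 : Real.exp b ≤ 1 := Real.exp_le_one_iff.2 hb
  have h4 := Real.exp_pos b
  nlinarith

lemma sum_setIntegral (σ : Measure ℝ) (g : ℝ → ℝ) (c : ℝ) (hc : 0 ≤ c) (m : ℕ)
    (hg : IntegrableOn g (Ico 0 ((m : ℝ) * c)) σ) :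
    ∫ t in Ico (0:ℝ) ((m:ℝ)*c), g t ∂σ
      = ∑ j ∈ Finset.range m, ∫ t in Ico ((j:ℝ)*c) (((j:ℝ)+1)*c), g t ∂σ := by
  induction m with
  | zero => simp
  | succ m ih =>
    have h0 : (0:ℝ) ≤ (m:ℝ)*c := by positivity
    have h1 : (m:ℝ)*c ≤ ((m:ℝ)+1)*c := by nlinarith
    have hu : Ico (0:ℝ) (((m:ℕ)+1:ℕ)*c) = Ico 0 ((m:ℝ)*c) ∪ Ico ((m:ℝ)*c) (((m:ℝ)+1)*c) := by
      rw [Ico_union_Ico_eq_Ico h0 h1]; push_cast; ring_nf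
    rw [hu, setIntegral_union Ico_disjoint_Ico_same measurableSet_Ico
      (hg.mono_set (hu ▸ subset_union_left)) (hg.mono_set (hu ▸ subset_union_right)),
      Finset.sum_range_succ, ih (hg.mono_set (hu ▸ subset_union_left))]

/-- The finite positive linear combinations of exponentials `x ↦ e^{-xt}`, `t ≥ 0`,
are dense in the `L²(0,1)` norm in the cone of completely monotone functions with
finite `L²(0,1)` norm. -/
theorem stmt17 (f : ℝ → ℝ) (σ : Measure ℝ) (hσ0 : σ (Set.Iio 0) = 0)
    (hint : ∀ x : ℝ, 0 < x → Integrable (fun t => Real.exp (-x * t)) σ)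
    (hf : ∀ x : ℝ, 0 < x → f x = ∫ t, Real.exp (-x * t) ∂σ)
    (hfL2 : MemLp f 2 (volume.restrict (Set.Ioo 0 1)))
    (δ : ℝ) (hδ : 0 < δ) :
    ∃ (n : ℕ) (c t : Fin n → ℝ), (∀ i, 0 ≤ c i) ∧ (∀ i, 0 ≤ t i) ∧
      eLpNorm (fun x => f x - ∑ i, c i * Real.exp (-x * t i)) 2
          (volume.restrict (Set.Ioo 0 1)) ≤ ENNReal.ofReal δ := by
  -- finiteness of σ on bounded sets
  have hfin : ∀ b : ℝ, σ (Ico 0 b) < ∞ := by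
    intro b
    have hi := hint 1 one_pos
    have hfi : ∫⁻ t, ENNReal.ofReal (Real.exp (-1 * t)) ∂σ < ∞ := by
      have h2 := hi.2
      rw [hasFiniteIntegral_iff_norm] at h2
      have heq : (fun t => ENNReal.ofReal (Real.exp (-1*t)))
          = fun t => ENNReal.ofReal ‖Real.exp (-1*t)‖ := by
        funext t; rw [Real.norm_eq_abs, abs_of_pos (Real.exp_pos _)]
      calc ∫⁻ t, ENNReal.ofReal (Real.exp (-1 * t)) ∂σ
          = ∫⁻ t, ENNReal.ofReal ‖Real.exp (-1 * t)‖ ∂σ := by rw [heq]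
        _ < ∞ := h2
    by_contra hc
    push_neg at hc
    have htop : σ (Ico 0 b) = ∞ := top_le_iff.mp hc
    have hlow : σ (Ico 0 b) * ENNReal.ofReal (Real.exp (-b))
        ≤ ∫⁻ t in Ico 0 b, ENNReal.ofReal (Real.exp (-1 * t)) ∂σ := by
      rw [mul_comm, ← setLIntegral_const]
      apply setLIntegral_mono' measurableSet_Ico
      intro t ht
      apply ENNReal.ofReal_le_ofReal
      apply Real.exp_le_exp.2
      have := ht.2; linarith
    have h2 : (∫⁻ t in Ico 0 b, ENNReal.ofReal (Real.exp (-1 * t)) ∂σ) < ∞ :=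
      lt_of_le_of_lt (lintegral_mono' Measure.restrict_le_self le_rfl) hfi
    rw [htop, ENNReal.top_mul (by simp [Real.exp_pos])] at hlow
    exact (lt_irrefl _ (lt_of_le_of_lt hlow h2)).elim
  -- ae membership in Ici 0
  have hae : ∀ᵐ t ∂σ, t ∈ Ici (0:ℝ) := by
    rw [ae_iff]
    convert hσ0 using 2
    ext t; simp [not_le]
  have hres : σ.restrict (Ici 0) = σ := Measure.restrict_eq_self_of_ae_mem hae
  -- truncated functions
  set F : ℕ → ℝ → ℝ := fun n x => ∫ t in Ico (0:ℝ) (n:ℝ), Real.exp (-x * t) ∂σ with hFdef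
  have hFmeas : ∀ n, StronglyMeasurable (F n) := by
    intro n
    haveI : IsFiniteMeasure (σ.restrict (Ico (0:ℝ) (n:ℝ))) :=
      ⟨by rw [Measure.restrict_apply_univ]; exact hfin n⟩
    have hc : Continuous fun p : ℝ × ℝ => Real.exp (-p.1 * p.2) :=
      Real.continuous_exp.comp (continuous_fst.neg.mul continuous_snd)
    exact hc.stronglyMeasurable.integral_prod_right'
  -- f as integral over Ici 0
  have hfx : ∀ x ∈ Ioo (0:ℝ) 1, f x = ∫ t in Ici (0:ℝ), Real.exp (-x * t) ∂σ := by
    intro x hx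
    rw [hf x hx.1]
    conv_lhs => rw [← hres]
  -- pointwise convergence
  have hptw : ∀ x ∈ Ioo (0:ℝ) 1, Tendsto (fun n => F n x) atTop (𝓝 (f x)) := by
    intro x hx
    have hU : (⋃ n : ℕ, Ico (0:ℝ) (n:ℝ)) = Ici 0 := by
      ext t
      simp only [mem_iUnion, mem_Ico, mem_Ici]
      constructor
      · rintro ⟨n, h1, _⟩; exact h1
      · intro ht
        obtain ⟨n, hn⟩ := exists_nat_gt t
        exact ⟨n, ht, hn⟩
    have hmono : Monotone fun n : ℕ => Ico (0:ℝ) (n:ℝ) := fun i j hij =>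
      Ico_subset_Ico le_rfl (by exact_mod_cast hij)
    have hintU : IntegrableOn (fun t => Real.exp (-x * t)) (⋃ n : ℕ, Ico (0:ℝ) (n:ℝ)) σ := by
      rw [hU]; exact (hint x hx.1).integrableOn
    have := tendsto_setIntegral_of_monotone (fun i => measurableSet_Ico) hmono hintU
    rw [hU] at this
    rw [hfx x hx]
    exact this
  -- bounds 0 ≤ F n x ≤ f x
  have hbd : ∀ n, ∀ x ∈ Ioo (0:ℝ) 1, 0 ≤ F n x ∧ F n x ≤ f x := by
    intro n x hx
    constructor
    · exact setIntegral_nonneg measurableSet_Ico fun t _ => (Real.exp_pos _).le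
    · rw [hfx x hx]
      apply setIntegral_mono_set (hint x hx.1).integrableOn
        (Eventually.of_forall fun t => (Real.exp_pos _).le)
      exact HasSubset.Subset.eventuallyLE (Ico_subset_Ici_self)
  -- eLpNorm formula
  have hform : ∀ g : ℝ → ℝ, eLpNorm g 2 (volume.restrict (Ioo 0 1))
      = (∫⁻ x in Ioo (0:ℝ) 1, ENNReal.ofReal (‖g x‖^2)) ^ (1/(2:ℝ)) := by
    intro g
    rw [eLpNorm_eq_lintegral_rpow_enorm_toReal (by norm_num) (by norm_num)]
    simp only [ENNReal.toReal_ofNat]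
    congr 1
    apply lintegral_congr
    intro x
    rw [← ofReal_norm,
      ENNReal.ofReal_rpow_of_nonneg (norm_nonneg _) (by norm_num : (0:ℝ) ≤ 2)]
    congr 1
    rw [show ((2:ℝ)) = ((2:ℕ):ℝ) by norm_num, Real.rpow_natCast]
  -- dominated convergence to find N
  have hfin2 : ∫⁻ x in Ioo (0:ℝ) 1, ENNReal.ofReal (‖f x‖^2) ≠ ∞ := by
    have hlt : (∫⁻ x in Ioo (0:ℝ) 1, ENNReal.ofReal (‖f x‖^2)) ^ (1/(2:ℝ)) < ∞ := by
      rw [← hform f]; exact hfL2.2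
    exact ((ENNReal.rpow_lt_top_iff_of_pos (by norm_num : (0:ℝ) < 1/2)).mp hlt).ne
  have hDCT : Tendsto (fun n => ∫⁻ x in Ioo (0:ℝ) 1, ENNReal.ofReal (‖f x - F n x‖^2))
      atTop (𝓝 0) := by
    have h0 : (0:ℝ≥0∞) = ∫⁻ x in Ioo (0:ℝ) 1, (fun _ => (0:ℝ≥0∞)) x := by simp
    rw [h0]
    apply tendsto_lintegral_of_dominated_convergence' (fun x => ENNReal.ofReal (‖f x‖^2))
    · intro n
      exact (((hfL2.1.sub (hFmeas n).aestronglyMeasurable).norm.aemeasurable.pow_const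
        2).ennreal_ofReal)
    · intro n
      filter_upwards [ae_restrict_mem measurableSet_Ioo] with x hx
      apply ENNReal.ofReal_le_ofReal
      have h1 := (hbd n x hx).1
      have h2 := (hbd n x hx).2
      have : ‖f x - F n x‖ ≤ ‖f x‖ := by
        rw [Real.norm_eq_abs, Real.norm_eq_abs, abs_of_nonneg (by linarith), abs_of_nonneg
          (by linarith)]
        linarith
      nlinarith [norm_nonneg (f x - F n x), norm_nonneg (f x)]
    · exact hfin2
    · filter_upwards [ae_restrict_mem measurableSet_Ioo] with x hx
      have h0 : Tendsto (fun n => f x - F n x) atTop (𝓝 0) := by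
        simpa using (hptw x hx).const_sub (f x)
      have h1 : Tendsto (fun n => ‖f x - F n x‖^2) atTop (𝓝 0) := by
        have := (h0.norm).pow 2
        simpa using this
      have := (ENNReal.continuous_ofReal.tendsto 0).comp h1
      simpa [Function.comp_def] using this
  obtain ⟨N, hN⟩ := (hDCT.eventually_lt_const
    (show (0:ℝ≥0∞) < (ENNReal.ofReal (δ/2))^(2:ℝ) by
      apply ENNReal.rpow_pos (ENNReal.ofReal_pos.mpr (half_pos hδ)) ENNReal.ofReal_ne_top)).exists
  have hNel : eLpNorm (fun x => f x - F N x) 2 (volume.restrict (Ioo 0 1))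
      ≤ ENNReal.ofReal (δ/2) := by
    rw [hform]
    calc (∫⁻ x in Ioo (0:ℝ) 1, ENNReal.ofReal (‖f x - F N x‖^2)) ^ (1/(2:ℝ))
        ≤ ((ENNReal.ofReal (δ/2))^(2:ℝ)) ^ (1/(2:ℝ)) :=
          ENNReal.rpow_le_rpow hN.le (by norm_num)
      _ = ENNReal.ofReal (δ/2) := by
          rw [← ENNReal.rpow_mul]; norm_num
  -- choose partition size k
  set S : ℝ := (σ (Ico (0:ℝ) (N:ℝ))).toReal with hSdef
  have hS0 : 0 ≤ S := ENNReal.toReal_nonneg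
  obtain ⟨k0, hk0⟩ := exists_nat_gt ((N:ℝ) * S / (δ/2))
  set k : ℕ := k0 + 1 with hkdef
  have hkpos : (0:ℝ) < k := by positivity
  have hk : (N:ℝ) * S / (δ/2) < k := lt_of_lt_of_le hk0 (by exact_mod_cast Nat.le_succ k0)
  set c : ℝ := (N:ℝ) / k with hcdef
  have hc0 : 0 ≤ c := by positivity
  have hkc : (k:ℝ) * c = (N:ℝ) := by rw [hcdef]; field_simp
  have hCS : c * S ≤ δ/2 := by
    rw [hcdef, div_mul_eq_mul_div, div_le_iff₀ hkpos]
    rw [div_lt_iff₀ (half_pos hδ)] at hk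
    nlinarith
  -- the approximation
  set I : ℕ → Set ℝ := fun j => Ico ((j:ℝ)*c) (((j:ℝ)+1)*c) with hIdef
  have hIsub : ∀ j ∈ Finset.range k, I j ⊆ Ico (0:ℝ) ((k:ℝ)*c) := by
    intro j hj
    rw [Finset.mem_range] at hj
    apply Ico_subset_Ico (by positivity)
    have : (j:ℝ) + 1 ≤ (k:ℝ) := by exact_mod_cast hj
    nlinarith
  have hIfin : ∀ j ∈ Finset.range k, σ (I j) < ∞ := by
    intro j hj
    apply lt_of_le_of_lt (measure_mono (hIsub j hj))
    rw [hkc]; exact hfin N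
  have hsum1 : ∑ j ∈ Finset.range k, (σ (I j)).toReal = S := by
    have hcint : IntegrableOn (fun _ => (1:ℝ)) (Ico (0:ℝ) ((k:ℝ)*c)) σ := by
      rw [integrableOn_const_iff]
      exact Or.inr (by rw [hkc]; exact hfin N)
    have := sum_setIntegral σ (fun _ => 1) c hc0 k hcint
    simp only [setIntegral_const, smul_eq_mul, mul_one] at this
    rw [hSdef, ← hkc]
    exact this.symm
  -- pointwise bound on approximation error
  have hunif : ∀ x ∈ Ioo (0:ℝ) 1,
      ‖F N x - ∑ j ∈ Finset.range k, (σ (I j)).toReal * Real.exp (-x * ((j:ℝ)*c))‖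
        ≤ c * S := by
    intro x hx
    have hxpos := hx.1
    have hx1 := hx.2
    have hFeq : F N x = ∑ j ∈ Finset.range k, ∫ t in I j, Real.exp (-x * t) ∂σ := by
      rw [hFdef]
      simp only
      rw [← hkc]
      exact sum_setIntegral σ _ c hc0 k (hint x hxpos).integrableOn
    have happrox : ∀ j ∈ Finset.range k,
        (σ (I j)).toReal * Real.exp (-x * ((j:ℝ)*c))
          = ∫ t in I j, Real.exp (-x * ((j:ℝ)*c)) ∂σ := by
      intro j hj
      rw [setIntegral_const, smul_eq_mul]; rfl
    rw [hFeq, Finset.sum_congr rfl happrox, ← Finset.sum_sub_distrib]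
    have hdiff : ∀ j ∈ Finset.range k,
        (∫ t in I j, Real.exp (-x * t) ∂σ) - ∫ t in I j, Real.exp (-x * ((j:ℝ)*c)) ∂σ
          = ∫ t in I j, (Real.exp (-x * t) - Real.exp (-x * ((j:ℝ)*c))) ∂σ := by
      intro j hj
      rw [integral_sub (hint x hxpos).integrableOn
        (integrableOn_const (hIfin j hj).ne)]
    rw [Finset.sum_congr rfl hdiff]
    calc ‖∑ j ∈ Finset.range k, ∫ t in I j,
            (Real.exp (-x * t) - Real.exp (-x * ((j:ℝ)*c))) ∂σ‖
        ≤ ∑ j ∈ Finset.range k, ‖∫ t in I j,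
            (Real.exp (-x * t) - Real.exp (-x * ((j:ℝ)*c))) ∂σ‖ := norm_sum_le _ _
      _ ≤ ∑ j ∈ Finset.range k, c * (σ (I j)).toReal := by
          apply Finset.sum_le_sum
          intro j hj
          apply norm_setIntegral_le_of_norm_le_const (hIfin j hj)
          intro t ht
          have htl : (j:ℝ)*c ≤ t := ht.1
          have htr : t < ((j:ℝ)+1)*c := ht.2
          have hjc0 : 0 ≤ (j:ℝ)*c := by positivity
          have hab : -x * t ≤ -x * ((j:ℝ)*c) := by nlinarith
          have hb0 : -x * ((j:ℝ)*c) ≤ 0 := by nlinarith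
          rw [Real.norm_eq_abs, abs_sub_comm, abs_of_nonneg
            (sub_nonneg.2 (Real.exp_le_exp.2 hab))]
          have := exp_lip hab hb0
          nlinarith
      _ = c * S := by rw [← Finset.mul_sum, hsum1]
  -- eLpNorm bound on approximation error
  have hAel : eLpNorm (fun x => F N x
        - ∑ j ∈ Finset.range k, (σ (I j)).toReal * Real.exp (-x * ((j:ℝ)*c))) 2
      (volume.restrict (Ioo 0 1)) ≤ ENNReal.ofReal (δ/2) := by
    have hbound : ∀ᵐ x ∂(volume.restrict (Ioo (0:ℝ) 1)),
        ‖F N x - ∑ j ∈ Finset.range k, (σ (I j)).toReal * Real.exp (-x * ((j:ℝ)*c))‖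
          ≤ c * S := by
      filter_upwards [ae_restrict_mem measurableSet_Ioo] with x hx
      exact hunif x hx
    calc eLpNorm _ 2 (volume.restrict (Ioo 0 1))
        ≤ (volume.restrict (Ioo (0:ℝ) 1)) Set.univ ^ (2:ℝ≥0∞).toReal⁻¹
            * ENNReal.ofReal (c * S) := eLpNorm_le_of_ae_bound hbound
      _ = ENNReal.ofReal (c * S) := by
          rw [Measure.restrict_apply_univ, Real.volume_Ioo]
          norm_num
      _ ≤ ENNReal.ofReal (δ/2) := ENNReal.ofReal_le_ofReal hCS
  -- assemble
  refine ⟨k, fun i => (σ (I (i:ℕ))).toReal, fun i => ((i:ℕ):ℝ)*c, fun i =>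
    ENNReal.toReal_nonneg, fun i => by positivity, ?_⟩
  have heq : (fun x => f x - ∑ i : Fin k, (σ (I (i:ℕ))).toReal * Real.exp (-x * (((i:ℕ):ℝ)*c)))
      = fun x => (f x - F N x)
        + (F N x - ∑ j ∈ Finset.range k, (σ (I j)).toReal * Real.exp (-x * ((j:ℝ)*c))) := by
    funext x
    rw [Fin.sum_univ_eq_sum_range (fun j => (σ (I j)).toReal * Real.exp (-x * ((j:ℝ)*c))) k]
    ring
  rw [heq]
  have hasm1 : AEStronglyMeasurable (fun x => f x - F N x) (volume.restrict (Ioo (0:ℝ) 1)) :=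
    hfL2.1.sub (hFmeas N).aestronglyMeasurable
  have hasm2 : AEStronglyMeasurable (fun x => F N x
      - ∑ j ∈ Finset.range k, (σ (I j)).toReal * Real.exp (-x * ((j:ℝ)*c)))
      (volume.restrict (Ioo (0:ℝ) 1)) := by
    apply (hFmeas N).aestronglyMeasurable.sub
    apply Continuous.aestronglyMeasurable
    apply continuous_finset_sum
    intro j _
    exact continuous_const.mul (Real.continuous_exp.comp (continuous_neg.mul continuous_const))
  calc eLpNorm _ 2 (volume.restrict (Ioo 0 1))
      ≤ eLpNorm (fun x => f x - F N x) 2 (volume.restrict (Ioo 0 1))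
        + eLpNorm (fun x => F N x
          - ∑ j ∈ Finset.range k, (σ (I j)).toReal * Real.exp (-x * ((j:ℝ)*c))) 2
          (volume.restrict (Ioo 0 1)) := eLpNorm_add_le hasm1 hasm2 one_le_two
    _ ≤ ENNReal.ofReal (δ/2) + ENNReal.ofReal (δ/2) := add_le_add hNel hAel
    _ = ENNReal.ofReal δ := by
        rw [← ENNReal.ofReal_add (by linarith) (by linarith)]
        norm_num
end
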